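/- arXiv:2509.17504 — 3 statements merged into one kernel-verified Lean document; each statement's English description precedes it below -/
import Mathlib

section
/- For real p ≥ 7 and a > 0, the ratio (∫₀^∞ w·(w/(w+a))²·w^{p/2-4} e^{-w/2} dw) / (∫₀^∞ (w/(w+a))²·w^{p/2-4} e^{-w/2} dw) is at least (∫₀^∞ w^{p/2-3} e^{-w/2} dw)/(∫₀^∞ w^{p/2-4} e^{-w/2} dw) = p - 6. -/
open MeasureTheory Set Real


lemma Jint {s : ℝ} (hs : -1 < s) :
    IntegrableOn (fun w : ℝ => w ^ s * Real.exp (-w / 2)) (Set.Ioi 0) := by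
  have h := integrableOn_rpow_mul_exp_neg_mul_rpow hs (by norm_num : (0:ℝ) < 1) (by norm_num : (0:ℝ) < 1/2)
  exact h.congr_fun (fun x hx => by simp only [Real.rpow_one]; ring_nf) measurableSet_Ioi

lemma Jval {s : ℝ} (hs : -1 < s) :
    ∫ w in Set.Ioi (0:ℝ), w ^ s * Real.exp (-w / 2)
      = (2:ℝ) ^ (s + 1) * Real.Gamma (s + 1) := by
  have h := integral_rpow_mul_exp_neg_mul_Ioi (a := s + 1) (r := 1/2)
    (by linarith) (by norm_num)
  rw [show s + 1 - 1 = s by ring] at h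
  rw [show ∫ w in Set.Ioi (0:ℝ), w ^ s * Real.exp (-w / 2)
      = ∫ t in Set.Ioi (0:ℝ), t ^ s * Real.exp (-(1/2 * t)) by
        refine setIntegral_congr_fun measurableSet_Ioi (fun t ht => ?_); ring_nf,
    h]
  norm_num

lemma Jpos {s : ℝ} (hs : -1 < s) :
    0 < ∫ w in Set.Ioi (0:ℝ), w ^ s * Real.exp (-w / 2) := by
  rw [Jval hs]
  have := Real.Gamma_pos_of_pos (show 0 < s + 1 by linarith)
  positivity

lemma Jrec {p : ℝ} (hp : 7 ≤ p) :
    ∫ w in Set.Ioi (0:ℝ), w ^ (p/2 - 3) * Real.exp (-w / 2)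
      = (p - 6) * ∫ w in Set.Ioi (0:ℝ), w ^ (p/2 - 4) * Real.exp (-w / 2) := by
  rw [Jval (by linarith), Jval (by linarith)]
  have h1 : p/2 - 3 + 1 = (p/2 - 4 + 1) + 1 := by ring
  rw [h1, Real.Gamma_add_one (by intro h; linarith [h]; )]
  rw [Real.rpow_add (by norm_num : (0:ℝ) < 2) _ 1, Real.rpow_one]
  ring

theorem stmt_8 (p : ℝ) (hp : 7 ≤ p) (a : ℝ) (ha : 0 < a) :
    (∫ w in Set.Ioi (0 : ℝ),
        w * (w / (w + a)) ^ 2 * w ^ (p / 2 - 4) * Real.exp (-w / 2)) /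
      (∫ w in Set.Ioi (0 : ℝ),
        (w / (w + a)) ^ 2 * w ^ (p / 2 - 4) * Real.exp (-w / 2)) ≥
      (∫ w in Set.Ioi (0 : ℝ), w ^ (p / 2 - 3) * Real.exp (-w / 2)) /
        (∫ w in Set.Ioi (0 : ℝ), w ^ (p / 2 - 4) * Real.exp (-w / 2)) ∧
    (∫ w in Set.Ioi (0 : ℝ), w ^ (p / 2 - 3) * Real.exp (-w / 2)) /
      (∫ w in Set.Ioi (0 : ℝ), w ^ (p / 2 - 4) * Real.exp (-w / 2)) = p - 6 := by
  have h4 : (-1:ℝ) < p/2 - 4 := by linarith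
  have h3 : (-1:ℝ) < p/2 - 3 := by linarith
  have hJ0 := Jpos h4
  have part2 : (∫ w in Set.Ioi (0:ℝ), w ^ (p/2 - 3) * Real.exp (-w / 2)) /
      (∫ w in Set.Ioi (0:ℝ), w ^ (p/2 - 4) * Real.exp (-w / 2)) = p - 6 := by
    rw [Jrec hp, mul_div_assoc, div_self (ne_of_gt hJ0), mul_one]
  refine ⟨?_, part2⟩
  rw [part2]
  set c : ℝ := p - 6 with hc
  have hc0 : 0 < c := by simp only [hc]; linarith
  have hca : 0 < c + a := by linarith
  -- monotonicity of g
  have hmono : ∀ x y : ℝ, 0 < x → x ≤ y → (x/(x+a))^2 ≤ (y/(y+a))^2 := by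
    intro x y hx hxy
    have hxa : 0 < x + a := by linarith
    have hya : 0 < y + a := by linarith
    apply pow_le_pow_left₀ (by positivity)
    rw [div_le_div_iff₀ hxa hya]
    nlinarith
  set A : ℝ → ℝ := fun w => w * (w / (w + a)) ^ 2 * w ^ (p / 2 - 4) * Real.exp (-w / 2) with hA
  set B : ℝ → ℝ := fun w => (w / (w + a)) ^ 2 * w ^ (p / 2 - 4) * Real.exp (-w / 2) with hB
  -- measurability
  have hrpow : ContinuousOn (fun w : ℝ => w ^ (p / 2 - 4)) (Set.Ioi 0) :=
    ContinuousOn.rpow_const continuousOn_id (fun x hx => Or.inl (ne_of_gt hx))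
  have hgcont : ContinuousOn (fun w : ℝ => (w / (w + a)) ^ 2) (Set.Ioi 0) := by
    apply ContinuousOn.pow
    exact ContinuousOn.div continuousOn_id
      ((continuous_id.add continuous_const).continuousOn)
      (fun x hx => by have : (0:ℝ) < x := hx; positivity)
  have hecont : ContinuousOn (fun w : ℝ => Real.exp (-w / 2)) (Set.Ioi 0) :=
    (Real.continuous_exp.comp (continuous_id.neg.div_const 2)).continuousOn
  have hmB : AEStronglyMeasurable B (volume.restrict (Set.Ioi 0)) :=
    ((hgcont.mul hrpow).mul hecont).aestronglyMeasurable measurableSet_Ioi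
  have hmA : AEStronglyMeasurable A (volume.restrict (Set.Ioi 0)) :=
    (((continuousOn_id.mul hgcont).mul hrpow).mul hecont).aestronglyMeasurable
      measurableSet_Ioi
  have hg1 : ∀ w : ℝ, 0 < w → (w/(w+a))^2 ≤ 1 := by
    intro w hw
    have hwa : 0 < w + a := by linarith
    calc (w/(w+a))^2 ≤ (1:ℝ)^2 := by
          apply pow_le_pow_left₀ (by positivity)
          rw [div_le_one hwa]; linarith
      _ = 1 := one_pow 2
  have hiB : IntegrableOn B (Set.Ioi 0) := by
    apply (Jint h4).mono' hmB
    filter_upwards [ae_restrict_mem measurableSet_Ioi] with w hw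
    have hw0 : (0:ℝ) < w := hw
    have hwa : 0 < w + a := by linarith
    rw [Real.norm_eq_abs, abs_of_nonneg (by positivity)]
    simp only [hB]
    have := hg1 w hw0
    nlinarith [mul_nonneg (mul_nonneg (sub_nonneg.mpr (hg1 w hw0))
      (Real.rpow_pos_of_pos hw0 (p/2-4)).le) (Real.exp_pos (-w/2)).le]
  have hiA : IntegrableOn A (Set.Ioi 0) := by
    apply (Jint h3).mono' hmA
    filter_upwards [ae_restrict_mem measurableSet_Ioi] with w hw
    have hw0 : (0:ℝ) < w := hw
    have hwa : 0 < w + a := by linarith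
    rw [Real.norm_eq_abs, abs_of_nonneg (by positivity)]
    simp only [hA]
    have hsplit : w ^ (p/2 - 3) = w * w ^ (p/2 - 4) := by
      rw [show p/2 - 3 = 1 + (p/2 - 4) by ring, Real.rpow_add hw0, Real.rpow_one]
    rw [hsplit]
    nlinarith [mul_nonneg (mul_nonneg (mul_nonneg (sub_nonneg.mpr (hg1 w hw0)) hw0.le)
      (Real.rpow_pos_of_pos hw0 (p/2-4)).le) (Real.exp_pos (-w/2)).le]
  -- positivity of ∫ B
  have hI0 : 0 < ∫ w in Set.Ioi (0:ℝ), B w := by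
    rw [setIntegral_pos_iff_support_of_nonneg_ae _ hiB]
    · have hsupp : (Function.support B) ∩ Set.Ioi 0 = Set.Ioi 0 := by
        rw [Set.inter_eq_right]
        intro x hx
        have hx0 : (0:ℝ) < x := hx
        have hxa : 0 < x + a := by linarith
        have : 0 < B x := by
          simp only [hB]
          positivity
        exact Function.mem_support.mpr (ne_of_gt this)
      rw [hsupp, Real.volume_Ioi]
      simp
    · filter_upwards [ae_restrict_mem measurableSet_Ioi] with w hw
      have hw0 : (0:ℝ) < w := hw
      have hwa : 0 < w + a := by linarith
      simp only [hB]
      positivity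
  -- main inequality
  rw [ge_iff_le, le_div_iff₀ hI0]
  set gc : ℝ := (c/(c+a))^2 with hgc
  have hFle : ∀ w ∈ Set.Ioi (0:ℝ),
      gc * (w ^ (p/2 - 3) * Real.exp (-w / 2) - c * (w ^ (p/2 - 4) * Real.exp (-w / 2)))
        ≤ A w - c * B w := by
    intro w hw
    have hw0 : (0:ℝ) < w := hw
    have hwa : 0 < w + a := by linarith
    have hsplit : w ^ (p/2 - 3) = w * w ^ (p/2 - 4) := by
      rw [show p/2 - 3 = 1 + (p/2 - 4) by ring, Real.rpow_add hw0, Real.rpow_one]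
    rw [hsplit]
    have hsign : 0 ≤ (w - c) * ((w/(w+a))^2 - gc) := by
      rcases le_total c w with h | h
      · exact mul_nonneg (by linarith) (by linarith [hmono c w hc0 h])
      · have := hmono w c hw0 h
        nlinarith
    rw [hgc] at hsign
    simp only [hA, hB, hgc]
    nlinarith [mul_nonneg (mul_nonneg hsign (Real.rpow_pos_of_pos hw0 (p/2-4)).le)
      (Real.exp_pos (-w/2)).le]
  have hiF : IntegrableOn (fun w : ℝ =>
      gc * (w ^ (p/2 - 3) * Real.exp (-w / 2) - c * (w ^ (p/2 - 4) * Real.exp (-w / 2))))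
      (Set.Ioi 0) := (((Jint h3).sub ((Jint h4).const_mul c)).const_mul gc)
  have hiD : IntegrableOn (fun w : ℝ => A w - c * B w) (Set.Ioi 0) :=
    hiA.sub (hiB.const_mul c)
  have hmain := setIntegral_mono_on hiF hiD measurableSet_Ioi hFle
  rw [integral_const_mul, integral_sub (Jint h3) ((Jint h4).const_mul c),
    integral_const_mul, Jrec hp, ← hc, sub_self, mul_zero] at hmain
  rw [integral_sub hiA (hiB.const_mul c), integral_const_mul] at hmain
  linarith
end

section
/- Let p ≥ 3, Φ : (0,∞) → (0,∞) continuous with G(w) = ∫₀^w Φ(t)/t dt finite, and suppose Φ(w)/G(w) ≤ β for all w > 0 with β ≤ p - 2. Then the function f(w) = w^{1/2}·((G(w) + 1/(p-2))/(G(w) + 1/(p-1)))² is monotone nondecreasing on (0,∞). -/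
open MeasureTheory

theorem stmt_12 (p : ℕ) (hp : 3 ≤ p) (Φ : ℝ → ℝ)
    (hpos : ∀ w > 0, 0 < Φ w) (hcont : ContinuousOn Φ (Set.Ioi 0))
    (hint : ∀ w > 0, IntervalIntegrable (fun t => Φ t / t) volume 0 w)
    (β : ℝ) (hβ : β ≤ (p : ℝ) - 2)
    (hratio : ∀ w > 0, Φ w / (∫ t in (0 : ℝ)..w, Φ t / t) ≤ β) :
    MonotoneOn
      (fun w => Real.sqrt w *
        (((∫ t in (0 : ℝ)..w, Φ t / t) + 1 / ((p : ℝ) - 2)) /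
          ((∫ t in (0 : ℝ)..w, Φ t / t) + 1 / ((p : ℝ) - 1))) ^ 2)
      (Set.Ioi 0) := by
  have hq : (3:ℝ) ≤ (p:ℝ) := by exact_mod_cast hp
  have hp2 : (0:ℝ) < (p:ℝ) - 2 := by linarith
  have hp1 : (0:ℝ) < (p:ℝ) - 1 := by linarith
  set G : ℝ → ℝ := fun w => ∫ t in (0 : ℝ)..w, Φ t / t with hGdef
  set a : ℝ := 1 / ((p:ℝ) - 2) with ha
  set b : ℝ := 1 / ((p:ℝ) - 1) with hb
  have ha0 : 0 < a := by positivity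
  have hb0 : 0 < b := by positivity
  show MonotoneOn (fun w => Real.sqrt w * ((G w + a)/(G w + b))^2) (Set.Ioi 0)
  have hconti : ContinuousOn (fun t => Φ t / t) (Set.Ioi 0) :=
    hcont.div continuousOn_id (fun t ht => ne_of_gt ht)
  have hGpos : ∀ x ∈ Set.Ioi (0:ℝ), 0 < G x := by
    intro x hx
    refine intervalIntegral.intervalIntegral_pos_of_pos_on (hint x hx) ?_ hx
    intro t ht
    exact div_pos (hpos t ht.1) ht.1
  have hGderiv : ∀ x ∈ Set.Ioi (0:ℝ), HasDerivAt G (Φ x / x) x := by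
    intro x hx
    have hmeas : StronglyMeasurableAtFilter (fun t => Φ t / t) (nhds x) volume :=
      hconti.stronglyMeasurableAtFilter isOpen_Ioi x hx
    have hca : ContinuousAt (fun t => Φ t / t) x :=
      hconti.continuousAt (isOpen_Ioi.mem_nhds hx)
    exact intervalIntegral.integral_hasDerivAt_right (hint x hx) hmeas hca
  have key : ∀ x ∈ Set.Ioi (0:ℝ), ∃ d,
      HasDerivAt (fun w => Real.sqrt w * ((G w + a)/(G w + b))^2) d x ∧ 0 ≤ d := by
    intro x hx
    have hx0 : (0:ℝ) < x := hx
    have hg : 0 < G x := hGpos x hx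
    have hne : G x + b ≠ 0 := by positivity
    have h1 : HasDerivAt (fun w => G w + a) (Φ x / x) x := (hGderiv x hx).add_const a
    have h2 : HasDerivAt (fun w => G w + b) (Φ x / x) x := (hGderiv x hx).add_const b
    have hq1 := ((h1.div h2 hne).pow 2)
    have hs := Real.hasDerivAt_sqrt hx0.ne'
    refine ⟨_, hs.mul hq1, ?_⟩
    -- nonnegativity of the derivative
    have hφ0 : 0 < Φ x := hpos x hx0
    have hφle : Φ x ≤ ((p:ℝ) - 2) * G x := by
      have := (hratio x hx0).trans hβ
      calc Φ x = Φ x / G x * G x := by field_simp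
        _ ≤ ((p:ℝ) - 2) * G x := by
            apply mul_le_mul_of_nonneg_right this hg.le
    set s : ℝ := Real.sqrt x with hsdef
    have hs0 : 0 < s := Real.sqrt_pos.2 hx0
    have hs2 : x = s * s := by rw [hsdef, Real.mul_self_sqrt hx0.le]
    set g : ℝ := G x with hgdef
    set φ : ℝ := Φ x with hφdef
    rw [hs2]
    have hgb : (0:ℝ) < g + b := by positivity
    have hkey : 4 * φ ≤ (((p:ℝ)-2) * g + 1) * (((p:ℝ)-1) * g + 1) := by
      nlinarith [sq_nonneg (((p:ℝ)-2) * g - 1), mul_nonneg (by positivity : (0:ℝ) ≤ ((p:ℝ)-2)*g+1) hg.le]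
    have h2' : ((p:ℝ)-2) ≠ 0 := hp2.ne'
    have h1' : ((p:ℝ)-1) ≠ 0 := hp1.ne'
    have hgb2 : g + 1/((p:ℝ)-1) ≠ 0 := by positivity
    have hfinal : 0 ≤ ((g + 1/((p:ℝ)-2)) * ((((p:ℝ)-2)*g+1) * ((((p:ℝ)-1))*g+1) - 4*φ)) /
        (2*s*(g + 1/((p:ℝ)-1))^3 * (((p:ℝ)-2)*(((p:ℝ)-1)))) := by
      apply div_nonneg
      · apply mul_nonneg (by positivity) (by linarith)
      · positivity
    have heq : 1/(2*s)*((g + 1/((p:ℝ)-2))/(g + 1/((p:ℝ)-1)))^2 +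
        s*(((2:ℕ):ℝ) * ((g + 1/((p:ℝ)-2))/(g + 1/((p:ℝ)-1)))^(2-1) *
          ((φ/(s*s)*(g + 1/((p:ℝ)-1)) - (g + 1/((p:ℝ)-2))*(φ/(s*s)))/(g + 1/((p:ℝ)-1))^2)) =
        ((g + 1/((p:ℝ)-2)) * ((((p:ℝ)-2)*g+1) * ((((p:ℝ)-1))*g+1) - 4*φ)) /
        (2*s*(g + 1/((p:ℝ)-1))^3 * (((p:ℝ)-2)*(((p:ℝ)-1)))) := by
      norm_num
      field_simp
      ring
    have hGx : G (s*s) = g := by rw [← hs2]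
    rw [ha, hb, Pi.div_apply]
    beta_reduce
    rw [hGx, heq]
    exact hfinal
  refine monotoneOn_of_deriv_nonneg (convex_Ioi 0) ?_ ?_ ?_
  · intro x hx
    exact ((key x hx).choose_spec.1).continuousAt.continuousWithinAt
  · intro x hx
    rw [interior_Ioi] at hx
    exact ((key x hx).choose_spec.1).differentiableAt.differentiableWithinAt
  · intro x hx
    rw [interior_Ioi] at hx
    obtain ⟨d, hd, hd0⟩ := key x hx
    rw [hd.deriv]
    exact hd0
end

section
/- Let p ≥ 3, b > 0, and φ(w) = (p-2) - b/(log(w+1) + bC) with C > 0 (the shrinkage factor induced by Φ₁(w) = (1/b)·w/(w+1)). Then the difference of unbiased risk estimates satisfies w·(log w)²·(4φ'(w) - (p-2-φ(w))²/w) → 4b - b² as w → ∞. -/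
open Filter

theorem stmt_13 (p : ℕ) (hp : 3 ≤ p) (b C : ℝ) (hb : 0 < b) (hC : 0 < C) :
    Tendsto
      (fun w : ℝ => w * (Real.log w) ^ 2 *
        (4 * deriv (fun x => ((p : ℝ) - 2) - b / (Real.log (x + 1) + b * C)) w -
          (((p : ℝ) - 2) -
            (((p : ℝ) - 2) - b / (Real.log (w + 1) + b * C))) ^ 2 / w))
      atTop (nhds (4 * b - b ^ 2)) := by
  -- (log(w+1)+bC)/log w → 1
  have h1 : Tendsto (fun w : ℝ => (Real.log (w+1) + b*C) / Real.log w) atTop (nhds 1) := by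
    have heq : ∀ᶠ w : ℝ in atTop, 1 + (Real.log (1 + 1/w) + b*C) / Real.log w
        = (Real.log (w+1) + b*C) / Real.log w := by
      filter_upwards [eventually_gt_atTop 1] with w hw
      have hw0 : (0:ℝ) < w := by linarith
      have hlog : Real.log w ≠ 0 := ne_of_gt (Real.log_pos hw)
      have hmul : w * (1 + 1/w) = w + 1 := by field_simp
      rw [← hmul, Real.log_mul (ne_of_gt hw0) (by positivity)]
      field_simp
      ring
    have h0 : Tendsto (fun w : ℝ => 1 + 1/w) atTop (nhds 1) := by
      have := tendsto_inv_atTop_zero (𝕜 := ℝ)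
      simpa [one_div] using tendsto_const_nhds.add this
    have hnum : Tendsto (fun w : ℝ => Real.log (1 + 1/w) + b*C) atTop (nhds (b*C)) := by
      have hlog1 : Tendsto (fun w : ℝ => Real.log (1 + 1/w)) atTop (nhds 0) := by
        have := (Real.continuousAt_log (x := 1) one_ne_zero).tendsto.comp h0
        simpa [Function.comp_def] using this
      simpa using hlog1.add tendsto_const_nhds
    have hdiv : Tendsto (fun w : ℝ => (Real.log (1 + 1/w) + b*C) / Real.log w) atTop (nhds 0) :=
      hnum.div_atTop Real.tendsto_log_atTop
    have := (tendsto_const_nhds (x := (1:ℝ))).add hdiv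
    simpa using this.congr' heq
  have hL : Tendsto (fun w : ℝ => Real.log w / (Real.log (w+1) + b*C)) atTop (nhds 1) := by
    have := h1.inv₀ one_ne_zero
    simpa [inv_div] using this
  -- w/(w+1) → 1
  have hW : Tendsto (fun w : ℝ => w / (w+1)) atTop (nhds 1) := by
    have hinv : Tendsto (fun w : ℝ => 1/(w+1)) atTop (nhds 0) := by
      have := tendsto_inv_atTop_zero (𝕜 := ℝ)
      simpa [one_div, Function.comp_def] using this.comp (tendsto_atTop_add_const_right atTop 1 tendsto_id)
    have heq : ∀ᶠ w : ℝ in atTop, 1 - 1/(w+1) = w/(w+1) := by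
      filter_upwards [eventually_gt_atTop 0] with w hw
      have : w + 1 ≠ 0 := by linarith
      field_simp
      ring
    have := (tendsto_const_nhds (x := (1:ℝ))).sub hinv
    simpa using this.congr' heq
  have hmain : Tendsto (fun w : ℝ => (Real.log w / (Real.log (w+1)+b*C))^2 * (4*b*(w/(w+1)) - b^2))
      atTop (nhds (4 * b - b ^ 2)) := by
    have := (hL.pow 2).mul (((tendsto_const_nhds (x := 4*b)).mul hW).sub (tendsto_const_nhds (x := b^2)))
    simpa using this
  refine hmain.congr' ?_
  filter_upwards [eventually_ge_atTop 1] with w hw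
  have hw0 : (0:ℝ) < w := by linarith
  have hw1 : (0:ℝ) < w + 1 := by linarith
  have hLpos : 0 < Real.log (w+1) + b*C := by
    have h2 : 0 ≤ Real.log (w+1) := Real.log_nonneg (by linarith)
    nlinarith
  have hf : HasDerivAt (fun x : ℝ => Real.log (x+1) + b*C) (1/(w+1)) w := by
    have h := (Real.hasDerivAt_log (ne_of_gt hw1)).comp w ((hasDerivAt_id w).add_const 1)
    simpa [one_div] using h.add_const (b*C)
  have hd : HasDerivAt (fun x : ℝ => ((p:ℝ)-2) - b/(Real.log (x+1)+b*C))
      (b*(1/(w+1))/(Real.log (w+1)+b*C)^2) w := by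
    have hq := (hasDerivAt_const w b).div hf (ne_of_gt hLpos)
    have h2 := (hasDerivAt_const w ((p:ℝ)-2)).sub hq
    convert h2 using 1
    · rfl
    · rfl
    · rfl
    · ring
  rw [hd.deriv]
  have hLne : Real.log (w+1) + b*C ≠ 0 := ne_of_gt hLpos
  field_simp
  ring
end
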